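/- arXiv:2010.15679 — 3 statements merged into one kernel-verified Lean document; each statement's English description precedes it below -/
import Mathlib

section
/- The Hamiltonian is constant along the Manakov soliton: for all t ∈ ℝ, H(X(·,t)) = H(X(·,0)), where H(u) = (1/2) ∫ℝ (|∂ₓu₁(x)|² + |∂ₓu₂(x)|²) dx − (1/4) ∫ℝ (|u₁(x)|² + |u₂(x)|²)² dx. -/
/-- The Manakov soliton `X(x,t) = η sech(η(x − τ(t))) exp(−iκ(x − τ(t)) + iα(t)) · A`,
where `τ(t) = τ₀ − κt`, `α(t) = α₀ + ((η² + κ²)/2)t` and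
`A = (cos(θ/2) e^{iφ₁}, sin(θ/2) e^{iφ₂})`. -/
noncomputable def manakovSoliton (η κ α₀ τ₀ θ φ₁ φ₂ : ℝ) (x t : ℝ) : ℂ × ℂ :=
  ((η / Real.cosh (η * (x - (τ₀ - κ * t))) : ℝ) : ℂ) •
    (Complex.exp (Complex.I *
        (((-(κ * (x - (τ₀ - κ * t))) + (α₀ + (η ^ 2 + κ ^ 2) / 2 * t)) : ℝ) : ℂ)) •
      (((Real.cos (θ / 2) : ℝ) : ℂ) * Complex.exp (Complex.I * (φ₁ : ℂ)),
       ((Real.sin (θ / 2) : ℝ) : ℂ) * Complex.exp (Complex.I * (φ₂ : ℂ))))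

open MeasureTheory

/-- The soliton at time `t` is a unimodular constant times a spatial translate of the
soliton at time `0`. -/
lemma manakovSoliton_shift (η κ α₀ τ₀ θ φ₁ φ₂ x t : ℝ) :
    manakovSoliton η κ α₀ τ₀ θ φ₁ φ₂ x t =
      Complex.exp (Complex.I * (((η ^ 2 + κ ^ 2) / 2 * t : ℝ) : ℂ)) •
        manakovSoliton η κ α₀ τ₀ θ φ₁ φ₂ (x + κ * t) 0 := by
  unfold manakovSoliton
  have harg : η * (x + κ * t - (τ₀ - κ * 0)) = η * (x - (τ₀ - κ * t)) := by ring
  rw [harg]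
  have hexp : Complex.exp (Complex.I *
        (((-(κ * (x - (τ₀ - κ * t))) + (α₀ + (η ^ 2 + κ ^ 2) / 2 * t)) : ℝ) : ℂ)) =
      Complex.exp (Complex.I * (((η ^ 2 + κ ^ 2) / 2 * t : ℝ) : ℂ)) *
      Complex.exp (Complex.I *
        (((-(κ * (x + κ * t - (τ₀ - κ * 0))) + (α₀ + (η ^ 2 + κ ^ 2) / 2 * 0)) : ℝ) : ℂ)) := by
    rw [← Complex.exp_add]; congr 1; push_cast; ring
  simp only [Prod.smul_mk, Prod.mk.injEq, smul_eq_mul, hexp]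
  constructor <;> ring

/-- The Hamiltonian
`H(u) = (1/2)∫(|∂ₓu₁|² + |∂ₓu₂|²) − (1/4)∫(|u₁|² + |u₂|²)²`
is constant along the Manakov soliton. -/
theorem manakovSoliton_hamiltonian_const (η κ α₀ τ₀ θ φ₁ φ₂ : ℝ) (hη : 0 < η) :
    ∀ t : ℝ,
      (1 / 2 : ℝ) * ∫ x : ℝ,
          ((‖deriv (fun x' : ℝ => (manakovSoliton η κ α₀ τ₀ θ φ₁ φ₂ x' t).1) x‖) ^ 2
            + (‖deriv (fun x' : ℝ => (manakovSoliton η κ α₀ τ₀ θ φ₁ φ₂ x' t).2) x‖) ^ 2)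
        - (1 / 4 : ℝ) * ∫ x : ℝ,
          ((‖(manakovSoliton η κ α₀ τ₀ θ φ₁ φ₂ x t).1‖) ^ 2
            + (‖(manakovSoliton η κ α₀ τ₀ θ φ₁ φ₂ x t).2‖) ^ 2) ^ 2
      = (1 / 2 : ℝ) * ∫ x : ℝ,
          ((‖deriv (fun x' : ℝ => (manakovSoliton η κ α₀ τ₀ θ φ₁ φ₂ x' 0).1) x‖) ^ 2
            + (‖deriv (fun x' : ℝ => (manakovSoliton η κ α₀ τ₀ θ φ₁ φ₂ x' 0).2) x‖) ^ 2)
        - (1 / 4 : ℝ) * ∫ x : ℝ,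
          ((‖(manakovSoliton η κ α₀ τ₀ θ φ₁ φ₂ x 0).1‖) ^ 2
            + (‖(manakovSoliton η κ α₀ τ₀ θ φ₁ φ₂ x 0).2‖) ^ 2) ^ 2 := by
  intro t
  set c : ℂ := Complex.exp (Complex.I * (((η ^ 2 + κ ^ 2) / 2 * t : ℝ) : ℂ)) with hc
  have habs : ‖c‖ = 1 := by
    rw [hc, Complex.norm_exp]
    have h0 : (Complex.I * (((η ^ 2 + κ ^ 2) / 2 * t : ℝ) : ℂ)).re = 0 := by
      rw [Complex.mul_re, Complex.I_re, Complex.I_im, Complex.ofReal_im]; ring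
    rw [h0, Real.exp_zero]
  -- component functions at time t are c times translated components at time 0
  have h1 : (fun x' : ℝ => (manakovSoliton η κ α₀ τ₀ θ φ₁ φ₂ x' t).1)
      = fun x' => c * (manakovSoliton η κ α₀ τ₀ θ φ₁ φ₂ (x' + κ * t) 0).1 := by
    funext x; rw [manakovSoliton_shift]; rfl
  have h2 : (fun x' : ℝ => (manakovSoliton η κ α₀ τ₀ θ φ₁ φ₂ x' t).2)
      = fun x' => c * (manakovSoliton η κ α₀ τ₀ θ φ₁ φ₂ (x' + κ * t) 0).2 := by
    funext x; rw [manakovSoliton_shift]; rfl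
  have hd1 : ∀ x : ℝ, deriv (fun x' : ℝ => (manakovSoliton η κ α₀ τ₀ θ φ₁ φ₂ x' t).1) x
      = c * deriv (fun x' : ℝ => (manakovSoliton η κ α₀ τ₀ θ φ₁ φ₂ x' 0).1) (x + κ * t) := by
    intro x
    rw [h1, deriv_const_mul_field,
      deriv_comp_add_const (fun x' : ℝ => (manakovSoliton η κ α₀ τ₀ θ φ₁ φ₂ x' 0).1) (κ * t)]
  have hd2 : ∀ x : ℝ, deriv (fun x' : ℝ => (manakovSoliton η κ α₀ τ₀ θ φ₁ φ₂ x' t).2) x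
      = c * deriv (fun x' : ℝ => (manakovSoliton η κ α₀ τ₀ θ φ₁ φ₂ x' 0).2) (x + κ * t) := by
    intro x
    rw [h2, deriv_const_mul_field,
      deriv_comp_add_const (fun x' : ℝ => (manakovSoliton η κ α₀ τ₀ θ φ₁ φ₂ x' 0).2) (κ * t)]
  have hI2 : (∫ x : ℝ,
      ((‖(manakovSoliton η κ α₀ τ₀ θ φ₁ φ₂ x t).1‖) ^ 2
        + (‖(manakovSoliton η κ α₀ τ₀ θ φ₁ φ₂ x t).2‖) ^ 2) ^ 2)
      = ∫ x : ℝ,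
      ((‖(manakovSoliton η κ α₀ τ₀ θ φ₁ φ₂ x 0).1‖) ^ 2
        + (‖(manakovSoliton η κ α₀ τ₀ θ φ₁ φ₂ x 0).2‖) ^ 2) ^ 2 := by
    rw [← integral_add_right_eq_self (fun x : ℝ =>
      ((‖(manakovSoliton η κ α₀ τ₀ θ φ₁ φ₂ x 0).1‖) ^ 2
        + (‖(manakovSoliton η κ α₀ τ₀ θ φ₁ φ₂ x 0).2‖) ^ 2) ^ 2) (κ * t)]
    congr 1; funext x
    have e1 := congrFun h1 x
    have e2 := congrFun h2 x
    rw [e1, e2, norm_mul, norm_mul, habs, one_mul, one_mul]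
  congr 1
  rw [← integral_add_right_eq_self (fun x : ℝ =>
      ((‖deriv (fun x' : ℝ => (manakovSoliton η κ α₀ τ₀ θ φ₁ φ₂ x' 0).1) x‖) ^ 2
        + (‖deriv (fun x' : ℝ => (manakovSoliton η κ α₀ τ₀ θ φ₁ φ₂ x' 0).2) x‖) ^ 2)
      - (1 / 4 : ℝ) * ∫ y : ℝ,
          ((‖(manakovSoliton η κ α₀ τ₀ θ φ₁ φ₂ y 0).1‖) ^ 2
            + (‖(manakovSoliton η κ α₀ τ₀ θ φ₁ φ₂ y 0).2‖) ^ 2) ^ 2) (κ * t)]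
  congr 1; funext x
  rw [hd1 x, hd2 x, norm_mul, norm_mul, habs, one_mul, one_mul, hI2]
end

section
/- The squared L²-norm of the spatial derivative is constant along the Manakov soliton: for all t ∈ ℝ, ∫ℝ ( |∂ₓX₁(x,t)|² + |∂ₓX₂(x,t)|² ) dx = ∫ℝ ( |∂ₓX₁(x,0)|² + |∂ₓX₂(x,0)|² ) dx. -/
open MeasureTheory

/-- Fixed profile for a component of the soliton. -/
noncomputable def manakovProfile (η κ c : ℝ) (_a : ℂ) (y : ℝ) : ℂ :=
  ((η / Real.cosh (η * y) : ℝ) : ℂ) *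
    (Complex.exp (Complex.I * ((-(κ * y) : ℝ) : ℂ)) *
      (((c : ℝ) : ℂ) * Complex.exp (Complex.I * (‖(0:ℂ)‖ : ℝ))))

/-- Profile with arbitrary amplitude `a : ℂ`. -/
noncomputable def mProf (η κ : ℝ) (a : ℂ) (y : ℝ) : ℂ :=
  ((η / Real.cosh (η * y) : ℝ) : ℂ) *
    Complex.exp (Complex.I * ((-(κ * y) : ℝ) : ℂ)) * a

lemma manakovSoliton_fst (η κ α₀ τ₀ θ φ₁ φ₂ x t : ℝ) :
    (manakovSoliton η κ α₀ τ₀ θ φ₁ φ₂ x t).1 =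
      Complex.exp (Complex.I * ((α₀ + (η ^ 2 + κ ^ 2) / 2 * t : ℝ) : ℂ)) *
        mProf η κ (((Real.cos (θ / 2) : ℝ) : ℂ) * Complex.exp (Complex.I * (φ₁ : ℂ)))
          (x - (τ₀ - κ * t)) := by
  simp only [manakovSoliton, mProf, Prod.smul_fst, smul_eq_mul]
  push_cast
  rw [mul_add, Complex.exp_add]
  ring

lemma manakovSoliton_snd (η κ α₀ τ₀ θ φ₁ φ₂ x t : ℝ) :
    (manakovSoliton η κ α₀ τ₀ θ φ₁ φ₂ x t).2 =
      Complex.exp (Complex.I * ((α₀ + (η ^ 2 + κ ^ 2) / 2 * t : ℝ) : ℂ)) *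
        mProf η κ (((Real.sin (θ / 2) : ℝ) : ℂ) * Complex.exp (Complex.I * (φ₂ : ℂ)))
          (x - (τ₀ - κ * t)) := by
  simp only [manakovSoliton, mProf, Prod.smul_snd, smul_eq_mul]
  push_cast
  rw [mul_add, Complex.exp_add]
  ring

lemma abs_deriv_translate (η κ : ℝ) (a : ℂ) (r s x : ℝ) :
    ‖deriv (fun x' : ℝ =>
        Complex.exp (Complex.I * ((r : ℝ) : ℂ)) * mProf η κ a (x' - s)) x‖
      = ‖deriv (mProf η κ a) (x - s)‖ := by
  rw [deriv_const_mul_field, norm_mul]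
  have : ‖Complex.exp (Complex.I * ((r : ℝ) : ℂ))‖ = 1 := by
    rw [Complex.norm_exp]
    simp [Complex.exp_zero]
  rw [this, one_mul]
  congr 1
  exact deriv_comp_sub_const _ _ _

/-- The squared `L²`-norm of the spatial derivative,
`∫ (|∂ₓX₁|² + |∂ₓX₂|²) dx`, is constant along the Manakov soliton. -/
theorem manakovSoliton_deriv_L2_const (η κ α₀ τ₀ θ φ₁ φ₂ : ℝ) (hη : 0 < η) :
    ∀ t : ℝ,
      (∫ x : ℝ,
        ((‖deriv (fun x' : ℝ => (manakovSoliton η κ α₀ τ₀ θ φ₁ φ₂ x' t).1) x‖) ^ 2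
          + (‖deriv (fun x' : ℝ => (manakovSoliton η κ α₀ τ₀ θ φ₁ φ₂ x' t).2) x‖) ^ 2))
      = ∫ x : ℝ,
        ((‖deriv (fun x' : ℝ => (manakovSoliton η κ α₀ τ₀ θ φ₁ φ₂ x' 0).1) x‖) ^ 2
          + (‖deriv (fun x' : ℝ => (manakovSoliton η κ α₀ τ₀ θ φ₁ φ₂ x' 0).2) x‖) ^ 2) := by
  intro t
  set a₁ : ℂ := ((Real.cos (θ / 2) : ℝ) : ℂ) * Complex.exp (Complex.I * (φ₁ : ℂ))
  set a₂ : ℂ := ((Real.sin (θ / 2) : ℝ) : ℂ) * Complex.exp (Complex.I * (φ₂ : ℂ))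
  set F : ℝ → ℝ := fun y =>
    (‖deriv (mProf η κ a₁) y‖) ^ 2 + (‖deriv (mProf η κ a₂) y‖) ^ 2
  have key : ∀ s : ℝ,
      (∫ x : ℝ,
        ((‖deriv (fun x' : ℝ => (manakovSoliton η κ α₀ τ₀ θ φ₁ φ₂ x' s).1) x‖) ^ 2
          + (‖deriv (fun x' : ℝ => (manakovSoliton η κ α₀ τ₀ θ φ₁ φ₂ x' s).2) x‖) ^ 2))
      = ∫ y : ℝ, F y := by
    intro s
    have h1 : (fun x' : ℝ => (manakovSoliton η κ α₀ τ₀ θ φ₁ φ₂ x' s).1)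
        = fun x' : ℝ => Complex.exp (Complex.I * ((α₀ + (η ^ 2 + κ ^ 2) / 2 * s : ℝ) : ℂ)) *
            mProf η κ a₁ (x' - (τ₀ - κ * s)) :=
      funext fun x' => manakovSoliton_fst η κ α₀ τ₀ θ φ₁ φ₂ x' s
    have h2 : (fun x' : ℝ => (manakovSoliton η κ α₀ τ₀ θ φ₁ φ₂ x' s).2)
        = fun x' : ℝ => Complex.exp (Complex.I * ((α₀ + (η ^ 2 + κ ^ 2) / 2 * s : ℝ) : ℂ)) *
            mProf η κ a₂ (x' - (τ₀ - κ * s)) :=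
      funext fun x' => manakovSoliton_snd η κ α₀ τ₀ θ φ₁ φ₂ x' s
    have : (fun x : ℝ =>
        ((‖deriv (fun x' : ℝ => (manakovSoliton η κ α₀ τ₀ θ φ₁ φ₂ x' s).1) x‖) ^ 2
          + (‖deriv (fun x' : ℝ => (manakovSoliton η κ α₀ τ₀ θ φ₁ φ₂ x' s).2) x‖) ^ 2))
        = fun x : ℝ => F (x - (τ₀ - κ * s)) := by
      funext x
      rw [h1, h2, abs_deriv_translate, abs_deriv_translate]
    rw [this]
    exact integral_sub_right_eq_self F (τ₀ - κ * s)
  rw [key t, key 0]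
end

section
/- The second moment of the squared hyperbolic secant satisfies ∫ℝ x² / cosh²(x) dx = π²/6. -/
open MeasureTheory Real Filter Set Finset Topology

lemma eta_two : HasSum (fun n : ℕ => (-1 : ℝ)^n / ((n : ℝ)+1)^2) (π^2/12) := by
  have hb : HasSum (fun n : ℕ => (1 : ℝ) / ((n : ℝ)+1)^2) (π^2/6) := by
    have h := hasSum_zeta_two
    rw [← hasSum_nat_add_iff' 1] at h
    simpa using h
  have hc : HasSum (fun n : ℕ => if Odd n then (1 : ℝ)/((n : ℝ)+1)^2 else 0) (π^2/24) := by
    have hinj : Function.Injective (fun k : ℕ => 2*k+1) := by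
      intro a b h; simp only [] at h; omega
    rw [← hinj.hasSum_iff (by
      intro x hx
      simp only [ite_eq_right_iff]
      intro hodd
      obtain ⟨k, hk⟩ := hodd
      exact absurd ⟨k, by simp only []; omega⟩ hx)]
    have h2 : HasSum (fun k : ℕ => (1/4 : ℝ) * (1 / ((k : ℝ)+1)^2)) (π^2/24) := by
      rw [show (π^2/24 : ℝ) = 1/4 * (π^2/6) by ring]; exact hb.mul_left (1/4)
    convert h2 using 2 with k
    have hodd : Odd (2*k+1) := ⟨k, by omega⟩
    simp only [Function.comp, hodd, if_true]
    push_cast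
    rw [show ((2:ℝ)*k+1+1)^2 = 4*((k:ℝ)+1)^2 by ring]
    rw [one_div, mul_one_div, one_div]
    field_simp
  have hs := hb.sub (hc.mul_left 2)
  have heq : (fun n : ℕ => (-1:ℝ)^n/((n:ℝ)+1)^2)
      = fun n : ℕ => 1/((n:ℝ)+1)^2 - 2*(if Odd n then (1:ℝ)/((n:ℝ)+1)^2 else 0) := by
    funext n
    rcases Nat.even_or_odd n with he | ho
    · rw [he.neg_one_pow]; simp [Nat.not_odd_iff_even.2 he]
    · rw [ho.neg_one_pow]; simp only [ho, if_true]; ring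
  rw [heq, show (π^2/12 : ℝ) = π^2/6 - 2*(π^2/24) by ring]
  exact hs

lemma int_x_exp {c : ℝ} (hc : 0 < c) :
    ∫ x in Ioi (0:ℝ), x * exp (-(c*x)) = 1/c^2 := by
  have h := integral_rpow_mul_exp_neg_mul_Ioi (a := 2) (r := c) two_pos hc
  rw [show (2:ℝ)-1 = 1 by norm_num] at h
  simp only [rpow_one, Real.Gamma_two, mul_one] at h
  rw [h, show (2:ℝ) = ((2:ℕ):ℝ) by norm_num, rpow_natCast, div_pow, one_pow]

lemma int_x_exp_le {c : ℝ} (hc : 0 < c) :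
    IntegrableOn (fun x => x * exp (-(c*x))) (Ioi (0:ℝ)) := by
  have h := integrableOn_rpow_mul_exp_neg_mul_rpow (p := 1) (s := 1) (b := c)
    (by norm_num) one_pos hc
  refine h.congr_fun (fun x hx => ?_) measurableSet_Ioi
  simp [rpow_one, neg_mul]

lemma hasDerivAt_tanh' (x : ℝ) : HasDerivAt Real.tanh (1 / Real.cosh x ^ 2) x := by
  have h := (Real.hasDerivAt_sinh x).div (Real.hasDerivAt_cosh x) (Real.cosh_pos x).ne'
  have : (Real.cosh x * Real.cosh x - Real.sinh x * Real.sinh x) / Real.cosh x ^ 2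
      = 1 / Real.cosh x ^ 2 := by
    rw [show Real.cosh x * Real.cosh x - Real.sinh x * Real.sinh x
        = Real.cosh x ^ 2 - Real.sinh x ^ 2 by ring, Real.cosh_sq_sub_sinh_sq]
  rw [this] at h
  exact h.congr_of_eventuallyEq (Eventually.of_forall fun y => Real.tanh_eq_sinh_div_cosh y)

lemma one_sub_tanh (x : ℝ) : 1 - Real.tanh x = exp (-x) / Real.cosh x := by
  rw [Real.tanh_eq_sinh_div_cosh, eq_div_iff (Real.cosh_pos x).ne', sub_mul, one_mul,
    div_mul_cancel₀ _ (Real.cosh_pos x).ne']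
  rw [← Real.cosh_sub_sinh]

lemma exp_div_two_le_cosh (x : ℝ) : exp x / 2 ≤ Real.cosh x := by
  rw [Real.cosh_eq]
  have := (exp_pos (-x)).le
  linarith

lemma pointwise_id (N : ℕ) (x : ℝ) :
    2*x*(1 - Real.tanh x) - ∑ n ∈ range N, 4*(-1:ℝ)^n*(x*exp (-(2*((n:ℝ)+1)*x)))
      = 4*x*(exp (-x))^2*(-(exp (-x))^2)^N / (1+(exp (-x))^2) := by
  have hu : (0:ℝ) < exp (-x) := exp_pos _
  set u := exp (-x) with hudef
  have hex : exp x = u⁻¹ := by rw [hudef, ← Real.exp_neg, neg_neg]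
  have h3 : ∀ n : ℕ, exp (-(2*((n:ℝ)+1)*x)) = (u^2)^(n+1) := by
    intro n
    rw [hudef, ← Real.exp_nat_mul, ← Real.exp_nat_mul]
    push_cast
    ring_nf
  have hsum : ∑ n ∈ range N, 4*(-1:ℝ)^n*(x*exp (-(2*((n:ℝ)+1)*x)))
      = 4*x*u^2 * ∑ n ∈ range N, (-u^2)^n := by
    rw [Finset.mul_sum]
    refine Finset.sum_congr rfl fun n _ => ?_
    rw [h3 n, neg_pow]
    ring
  have hgeom : ∑ n ∈ range N, (-u^2:ℝ)^n = ((-u^2)^N - 1)/((-u^2) - 1) :=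
    geom_sum_eq (by nlinarith) N
  have htanh : 1 - Real.tanh x = u / ((u⁻¹ + u)/2) := by
    rw [one_sub_tanh, Real.cosh_eq, hex, hudef]
  rw [hsum, hgeom, htanh]
  have h1 : (1 + u^2:ℝ) ≠ 0 := by positivity
  have h2 : (-u^2 - 1:ℝ) ≠ 0 := by nlinarith [sq_nonneg u]
  field_simp
  ring

lemma sech_le (x : ℝ) (hx : 0 ≤ x) : 1 / Real.cosh x ≤ 2 * exp (-x) := by
  rw [div_le_iff₀ (Real.cosh_pos x)]
  have h := exp_div_two_le_cosh x
  have h2 : exp (-x) * exp x = 1 := by rw [← Real.exp_add]; simp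
  nlinarith [exp_pos x, exp_pos (-x), Real.cosh_pos x]

lemma int_f : IntegrableOn (fun x : ℝ => x^2 / Real.cosh x^2) (Ioi 0) := by
  apply integrable_of_isBigO_exp_neg (a := 0) (b := 1) one_pos
  · exact (continuous_pow 2 |>.div (Real.continuous_cosh.pow 2)
      (fun x => pow_ne_zero 2 (Real.cosh_pos x).ne')).continuousOn
  · rw [Asymptotics.isBigO_iff]
    refine ⟨4, ?_⟩
    have ht := Real.tendsto_pow_mul_exp_neg_atTop_nhds_zero 2
    filter_upwards [ht.eventually (eventually_le_nhds one_pos), eventually_ge_atTop (0:ℝ)]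
      with x h1 hx
    have hc := Real.cosh_pos x
    have hb := sech_le x hx
    have : x^2 / Real.cosh x^2 ≤ 4 * (x^2 * exp (-x)) * exp (-x) := by
      have : x^2 / Real.cosh x ^ 2 = x^2 * (1/Real.cosh x)^2 := by field_simp
      rw [this]
      have h4 : (1/Real.cosh x)^2 ≤ (2*exp (-x))^2 := by
        apply pow_le_pow_left₀ (by positivity) hb
      nlinarith [sq_nonneg x, exp_pos (-x)]
    rw [norm_eq_abs, norm_eq_abs, abs_of_nonneg (by positivity : (0:ℝ) ≤ x^2 / Real.cosh x^2),
      abs_of_nonneg (exp_pos _).le]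
    calc x^2 / Real.cosh x^2 ≤ 4 * (x^2 * exp (-x)) * exp (-x) := this
      _ ≤ 4 * 1 * exp (-x) := by nlinarith [exp_pos (-x), sq_nonneg x]
      _ = 4 * exp (-1 * x) := by rw [neg_one_mul]; ring

lemma int_g : IntegrableOn (fun x : ℝ => 2*x*(1 - Real.tanh x)) (Ioi 0) := by
  apply integrable_of_isBigO_exp_neg (a := 0) (b := 1) one_pos
  · have : Continuous Real.tanh := by
      have := fun x => (hasDerivAt_tanh' x).continuousAt
      exact continuous_iff_continuousAt.2 this
    exact ((continuous_const.mul continuous_id).mul (continuous_const.sub this)).continuousOn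
  · rw [Asymptotics.isBigO_iff]
    refine ⟨4, ?_⟩
    have ht := Real.tendsto_pow_mul_exp_neg_atTop_nhds_zero 1
    filter_upwards [ht.eventually (eventually_le_nhds one_pos), eventually_ge_atTop (0:ℝ)]
      with x h1 hx
    rw [one_sub_tanh]
    have hb := sech_le x hx
    have hpos : (0:ℝ) ≤ 2*x*(exp (-x) / Real.cosh x) := by positivity
    rw [norm_eq_abs, norm_eq_abs, abs_of_nonneg hpos, abs_of_nonneg (exp_pos _).le]
    have : 2*x*(exp (-x)/Real.cosh x) = 2*x*exp (-x) * (1/Real.cosh x) := by ring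
    rw [this]
    calc 2*x*exp (-x) * (1/Real.cosh x) ≤ 2*x*exp (-x) * (2*exp (-x)) := by
          apply mul_le_mul_of_nonneg_left hb (by positivity)
      _ = 4 * (x^1 * exp (-x)) * exp (-x) := by ring
      _ ≤ 4 * 1 * exp (-x) := by nlinarith [exp_pos (-x)]
      _ = 4 * exp (-1 * x) := by rw [neg_one_mul]; ring

lemma ibp : ∫ x in Ioi (0:ℝ), x^2/Real.cosh x^2 = ∫ x in Ioi (0:ℝ), 2*x*(1-Real.tanh x) := by
  have hF : ∀ x ∈ Ici (0:ℝ), HasDerivAt (fun y : ℝ => y^2*Real.tanh y - y^2)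
      (x^2/Real.cosh x^2 - 2*x*(1-Real.tanh x)) x := by
    intro x _
    have h1 := ((hasDerivAt_pow 2 x).mul (hasDerivAt_tanh' x)).sub (hasDerivAt_pow 2 x)
    refine h1.congr_deriv ?_
    have hc := (Real.cosh_pos x).ne'
    field_simp
    ring
  have hbound : ∀ x : ℝ, 0 ≤ x → ‖x^2*Real.tanh x - x^2‖ ≤ 2*(x^2*exp (-(2*x))) := by
    intro x hx
    have h : x^2*Real.tanh x - x^2 = -(x^2*(1 - Real.tanh x)) := by ring
    rw [h, norm_neg, norm_eq_abs, abs_of_nonneg]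
    · rw [one_sub_tanh]
      have hb := sech_le x hx
      have : x^2*(exp (-x)/Real.cosh x) = x^2*exp (-x)*(1/Real.cosh x) := by ring
      rw [this]
      calc x^2*exp (-x)*(1/Real.cosh x) ≤ x^2*exp (-x)*(2*exp (-x)) :=
            mul_le_mul_of_nonneg_left hb (by positivity)
        _ = 2*(x^2*(exp (-x)*exp (-x))) := by ring
        _ = 2*(x^2*exp (-(2*x))) := by rw [← Real.exp_add]; ring_nf
    · have h1 : Real.tanh x ≤ 1 := by
        rw [← sub_nonneg, one_sub_tanh]; positivity
      nlinarith [sq_nonneg x]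
  have htends : Tendsto (fun x : ℝ => x^2*Real.tanh x - x^2) atTop (𝓝 0) := by
    apply squeeze_zero_norm' ((eventually_ge_atTop (0:ℝ)).mono fun x hx => hbound x hx)
    have h := (tendsto_rpow_mul_exp_neg_mul_atTop_nhds_zero 2 2 two_pos).const_mul 2
    rw [mul_zero] at h
    apply h.congr'
    filter_upwards [eventually_ge_atTop (0:ℝ)] with x hx
    rw [← Real.rpow_natCast x 2]
    push_cast
    ring_nf
  have key := integral_Ioi_of_hasDerivAt_of_tendsto'
    (f := fun y : ℝ => y^2*Real.tanh y - y^2)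
    (f' := fun x => x^2/Real.cosh x^2 - 2*x*(1-Real.tanh x)) hF (int_f.sub int_g) htends
  simp only [Real.tanh_zero] at key
  rw [integral_sub int_f int_g] at key
  norm_num at key
  linarith
lemma int_g_val : ∫ x in Ioi (0:ℝ), 2*x*(1-Real.tanh x) = π^2/12 := by
  set I := ∫ x in Ioi (0:ℝ), 2*x*(1-Real.tanh x) with hI
  set S : ℕ → ℝ := fun N => ∑ n ∈ range N, (-1:ℝ)^n/((n:ℝ)+1)^2 with hSdef
  have hterm_int : ∀ n : ℕ,
      IntegrableOn (fun x : ℝ => 4*(-1:ℝ)^n*(x*exp (-(2*((n:ℝ)+1)*x)))) (Ioi 0) :=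
    fun n => (int_x_exp_le (by positivity)).const_mul _
  have hterm_val : ∀ n : ℕ,
      ∫ x in Ioi (0:ℝ), 4*(-1:ℝ)^n*(x*exp (-(2*((n:ℝ)+1)*x))) = (-1:ℝ)^n/((n:ℝ)+1)^2 := by
    intro n
    rw [integral_const_mul, int_x_exp (c := 2*((n:ℝ)+1)) (by positivity)]
    have : ((n:ℝ)+1) ≠ 0 := by positivity
    field_simp
    ring
  have hsum_int : ∀ N : ℕ, IntegrableOn
      (fun x : ℝ => ∑ n ∈ range N, 4*(-1:ℝ)^n*(x*exp (-(2*((n:ℝ)+1)*x)))) (Ioi 0) :=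
    fun N => integrable_finset_sum _ (fun n _ => hterm_int n)
  have key : ∀ N : ℕ, |I - S N| ≤ 1/((N:ℝ)+1)^2 := by
    intro N
    have h1 : I - S N = ∫ x in Ioi (0:ℝ),
        (2*x*(1-Real.tanh x) - ∑ n ∈ range N, 4*(-1:ℝ)^n*(x*exp (-(2*((n:ℝ)+1)*x)))) := by
      rw [integral_sub int_g (hsum_int N), integral_finset_sum _ (fun n _ => hterm_int n)]
      simp_rw [hterm_val]
      rfl
    rw [h1]
    have hb_int : IntegrableOn (fun x : ℝ => 4*(x*exp (-(2*((N:ℝ)+1)*x)))) (Ioi 0) :=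
      (int_x_exp_le (by positivity)).const_mul 4
    have hr_int := int_g.sub (hsum_int N)
    have hle : ∀ x ∈ Ioi (0:ℝ),
        |2*x*(1-Real.tanh x) - ∑ n ∈ range N, 4*(-1:ℝ)^n*(x*exp (-(2*((n:ℝ)+1)*x)))|
          ≤ 4*(x*exp (-(2*((N:ℝ)+1)*x))) := by
      intro x hx
      have hx0 : (0:ℝ) < x := hx
      rw [pointwise_id N x]
      have hu : (0:ℝ) < exp (-x) := exp_pos _
      have h1 : (0:ℝ) < 1 + (exp (-x))^2 := by positivity
      have habs : |4*x*(exp (-x))^2*(-(exp (-x))^2)^N / (1+(exp (-x))^2)|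
          = 4*x*(exp (-x))^(2*N+2) / (1+(exp (-x))^2) := by
        rw [abs_div, abs_of_pos h1, abs_mul, abs_of_pos (by positivity : (0:ℝ) < 4*x*(exp (-x))^2),
          abs_pow, abs_neg, abs_of_pos (by positivity : (0:ℝ) < (exp (-x))^2), ← pow_mul]
        ring
      rw [habs]
      have hexp : (exp (-x))^(2*N+2) = exp (-(2*((N:ℝ)+1)*x)) := by
        rw [← Real.exp_nat_mul]
        congr 1
        push_cast
        ring
      rw [hexp]
      rw [div_le_iff₀ h1]
      nlinarith [mul_nonneg (mul_nonneg hx0.le (exp_pos (-(2*((N:ℝ)+1)*x))).le)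
        (sq_nonneg (exp (-x)))]
    have step1 : |∫ x in Ioi (0:ℝ),
        (2*x*(1-Real.tanh x) - ∑ n ∈ range N, 4*(-1:ℝ)^n*(x*exp (-(2*((n:ℝ)+1)*x))))|
        ≤ ∫ x in Ioi (0:ℝ),
            |2*x*(1-Real.tanh x) - ∑ n ∈ range N, 4*(-1:ℝ)^n*(x*exp (-(2*((n:ℝ)+1)*x)))| := by
      simpa [Real.norm_eq_abs] using MeasureTheory.norm_integral_le_integral_norm
        (μ := volume.restrict (Ioi (0:ℝ))) fun x : ℝ =>
          2*x*(1-Real.tanh x) - ∑ n ∈ range N, 4*(-1:ℝ)^n*(x*exp (-(2*((n:ℝ)+1)*x)))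
    calc |∫ x in Ioi (0:ℝ),
        (2*x*(1-Real.tanh x) - ∑ n ∈ range N, 4*(-1:ℝ)^n*(x*exp (-(2*((n:ℝ)+1)*x))))|
        ≤ ∫ x in Ioi (0:ℝ),
            |2*x*(1-Real.tanh x) - ∑ n ∈ range N, 4*(-1:ℝ)^n*(x*exp (-(2*((n:ℝ)+1)*x)))| :=
          step1
      _ ≤ ∫ x in Ioi (0:ℝ), 4*(x*exp (-(2*((N:ℝ)+1)*x))) :=
          setIntegral_mono_on hr_int.abs hb_int measurableSet_Ioi hle
      _ = 4 * (1/(2*((N:ℝ)+1))^2) := by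
          rw [integral_const_mul, int_x_exp (c := 2*((N:ℝ)+1)) (by positivity)]
      _ = 1/((N:ℝ)+1)^2 := by
          have : ((N:ℝ)+1) ≠ 0 := by positivity
          field_simp
          ring
  have hS : Tendsto S atTop (𝓝 (π^2/12)) := eta_two.tendsto_sum_nat
  have hbnd : Tendsto (fun N : ℕ => 1/((N:ℝ)+1)^2) atTop (𝓝 0) := by
    have h := tendsto_one_div_add_atTop_nhds_zero_nat (𝕜 := ℝ)
    have h2 := h.pow 2
    rw [show ((0:ℝ))^2 = 0 by norm_num] at h2
    refine h2.congr fun n => ?_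
    rw [div_pow, one_pow]
  have h0 : Tendsto (fun N : ℕ => I - S N) atTop (𝓝 0) :=
    squeeze_zero_norm (fun N => key N) hbnd
  have h2 : Tendsto S atTop (𝓝 I) := by
    have := tendsto_const_nhds (x := I) (f := atTop (α := ℕ)) |>.sub h0
    rw [sub_zero] at this
    refine this.congr fun n => by ring
  exact tendsto_nhds_unique h2 hS

/-- The second moment of the squared hyperbolic secant:
`∫ℝ x²/cosh²(x) dx = π²/6`. -/
theorem integral_sq_div_cosh_sq : ∫ x : ℝ, x ^ 2 / Real.cosh x ^ 2 = Real.pi ^ 2 / 6 := by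
  have h1 : (fun x : ℝ => x ^ 2 / Real.cosh x ^ 2)
      = fun x : ℝ => |x| ^ 2 / Real.cosh |x| ^ 2 := by
    funext x
    rw [Real.cosh_abs, sq_abs]
  calc ∫ x : ℝ, x ^ 2 / Real.cosh x ^ 2
      = ∫ x : ℝ, |x| ^ 2 / Real.cosh |x| ^ 2 := by rw [← h1]
    _ = 2 * ∫ x in Ioi (0:ℝ), x ^ 2 / Real.cosh x ^ 2 :=
        integral_comp_abs (f := fun x : ℝ => x ^ 2 / Real.cosh x ^ 2)
    _ = 2 * (π ^ 2 / 12) := by rw [ibp, int_g_val]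
    _ = Real.pi ^ 2 / 6 := by ring
end
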